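/- For 0 ≤ k ≤ n and r, s ≥ 0, G_{a,b}(n,k;r+s) = Σ_{i=k}^{n} C(n,i) · G_{a,b}(i,k;r) · ∏_{j=0}^{n−i−1}(a·j + (a+b)·s). -/
import Mathlib

open Finset

/-- The generalized r-Lah numbers `G_{a,b}(n,k;r)`. -/
def genLah {R : Type*} [CommRing R] (a b : R) (r : ℕ) : ℕ → ℕ → R
  | 0, 0 => 1
  | 0, _ + 1 => 0
  | n + 1, 0 => (a * ((n : R) + (r : R)) + b * (r : R)) * genLah a b r n 0
  | n + 1, k + 1 => genLah a b r n k +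
      (a * (n : R) + b * ((k : R) + 1) + (a + b) * (r : R)) * genLah a b r n (k + 1)

lemma genLah_eq_zero {R : Type*} [CommRing R] (a b : R) (r : ℕ) :
    ∀ n k, n < k → genLah a b r n k = 0 := by
  intro n
  induction n with
  | zero =>
    intro k hk
    match k, hk with
    | k + 1, _ => rfl
  | succ n ih =>
    intro k hk
    match k, hk with
    | k + 1, hk =>
      rw [genLah, ih k (by omega), ih (k+1) (by omega)]
      ring

lemma genLah_key {R : Type*} [CommRing R] (a b : R) (r s : ℕ) :
    ∀ n k, genLah a b (r + s) n k =
      ∑ i ∈ range (n + 1), (n.choose i : R) * genLah a b r i k *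
        ∏ j ∈ range (n - i), (a * (j : R) + (a + b) * (s : R)) := by
  intro n
  induction n with
  | zero =>
    intro k
    cases k with
    | zero => simp [genLah]
    | succ k => simp [genLah, genLah_eq_zero a b r 0 (k+1) (by omega),
        genLah_eq_zero a b (r+s) 0 (k+1) (by omega)]
  | succ n ih =>
    intro k
    -- Step 1: transform the RHS at level n+1
    have expand : ∑ i ∈ range (n + 2), ((n+1).choose i : R) * genLah a b r i k *
          ∏ j ∈ range (n + 1 - i), (a * (j : R) + (a + b) * (s : R))
        = ∑ j ∈ range (n + 1), (n.choose j : R) *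
            (genLah a b r (j+1) k
              + genLah a b r j k * (a * (((n - j : ℕ)) : R) + (a + b) * (s : R))) *
            ∏ i ∈ range (n - j), (a * (i : R) + (a + b) * (s : R)) := by
      have hB : ∑ i ∈ range (n + 2), (n.choose i : R) * genLah a b r i k *
            ∏ j ∈ range (n + 1 - i), (a * (j : R) + (a + b) * (s : R))
          = ∑ i ∈ range (n + 1), (n.choose i : R) * genLah a b r i k *
              ((∏ j ∈ range (n - i), (a * (j : R) + (a + b) * (s : R))) *
                (a * (((n - i : ℕ)) : R) + (a + b) * (s : R))) := by
        rw [sum_range_succ]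
        simp only [Nat.choose_succ_self, Nat.cast_zero, zero_mul]
        rw [add_zero]
        refine sum_congr rfl fun i hi => ?_
        simp only [mem_range] at hi
        rw [show n + 1 - i = (n - i) + 1 by omega, prod_range_succ]
      have split : ∑ i ∈ range (n + 2), ((n+1).choose i : R) * genLah a b r i k *
            ∏ j ∈ range (n + 1 - i), (a * (j : R) + (a + b) * (s : R))
          = (∑ j ∈ range (n + 1), (n.choose j : R) * genLah a b r (j+1) k *
              ∏ i ∈ range (n - j), (a * (i : R) + (a + b) * (s : R)))
            + ∑ i ∈ range (n + 2), (n.choose i : R) * genLah a b r i k *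
              ∏ j ∈ range (n + 1 - i), (a * (j : R) + (a + b) * (s : R)) := by
        rw [sum_range_succ' _ (n+1), sum_range_succ' (fun i => (n.choose i : R) * genLah a b r i k *
              ∏ j ∈ range (n + 1 - i), (a * (j : R) + (a + b) * (s : R))) (n+1)]
        have h1 : ∀ j ∈ range (n+1),
            ((n+1).choose (j+1) : R) * genLah a b r (j+1) k *
              ∏ jj ∈ range (n + 1 - (j+1)), (a * (jj : R) + (a + b) * (s : R))
            = (n.choose j : R) * genLah a b r (j+1) k *
                ∏ i ∈ range (n - j), (a * (i : R) + (a + b) * (s : R))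
              + (n.choose (j+1) : R) * genLah a b r (j+1) k *
                ∏ jj ∈ range (n + 1 - (j+1)), (a * (jj : R) + (a + b) * (s : R)) := by
          intro j hj
          have hch : ((n+1).choose (j+1) : R) = (n.choose j : R) + (n.choose (j+1) : R) := by
            rw [Nat.choose_succ_succ]; push_cast; ring
          simp only [Nat.succ_sub_succ]
          rw [hch]; ring
        rw [sum_congr rfl h1, sum_add_distrib]
        simp only [Nat.choose_zero_right, Nat.succ_sub_succ]
        ring
      rw [split, hB, ← sum_add_distrib]
      refine sum_congr rfl fun j hj => ?_
      ring
    cases k with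
    | zero =>
      rw [show genLah a b (r+s) (n+1) 0 =
        (a * ((n : R) + ((r+s : ℕ) : R)) + b * ((r+s : ℕ) : R)) * genLah a b (r+s) n 0 from rfl]
      rw [ih 0, expand]
      rw [mul_sum]
      refine sum_congr rfl fun j hj => ?_
      simp only [mem_range] at hj
      rw [show genLah a b r (j+1) 0 =
        (a * ((j : R) + (r : R)) + b * (r : R)) * genLah a b r j 0 from rfl]
      have hc : (((n - j : ℕ)) : R) = (n : R) - (j : R) := by
        rw [Nat.cast_sub (by omega)]
      rw [hc]
      push_cast
      ring
    | succ m =>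
      rw [show genLah a b (r+s) (n+1) (m+1) = genLah a b (r+s) n m +
        (a * (n : R) + b * ((m : R) + 1) + (a + b) * ((r+s : ℕ) : R)) *
          genLah a b (r+s) n (m+1) from rfl]
      rw [ih m, ih (m+1), expand, mul_sum, ← sum_add_distrib]
      refine sum_congr rfl fun j hj => ?_
      simp only [mem_range] at hj
      rw [show genLah a b r (j+1) (m+1) = genLah a b r j m +
        (a * (j : R) + b * ((m : R) + 1) + (a + b) * (r : R)) *
          genLah a b r j (m+1) from rfl]
      have hc : (((n - j : ℕ)) : R) = (n : R) - (j : R) := by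
        rw [Nat.cast_sub (by omega)]
      rw [hc]
      push_cast
      ring

theorem genLah_r_add_s {R : Type*} [CommRing R] (a b : R) (r s n k : ℕ) (hkn : k ≤ n) :
    genLah a b (r + s) n k =
      ∑ i ∈ Icc k n, (n.choose i : R) * genLah a b r i k *
        ∏ j ∈ range (n - i), (a * (j : R) + (a + b) * (s : R)) := by
  rw [genLah_key a b r s n k]
  rw [range_eq_Ico, Finset.Ico_add_one_right_eq_Icc 0 n]
  symm
  apply sum_subset
  · intro i hi
    simp only [mem_Icc] at *
    omega
  · intro i hi hni
    simp only [mem_Icc] at *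
    rw [genLah_eq_zero a b r i k (by omega)]
    ring
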